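/- Let ψ : ℂ → ℂ be entire with finite Segal–Bargmann norm, i.e. (1/π)∫_ℂ |ψ(z)|² e^{-|z|²} dA(z) < ∞. Then for every w ∈ ℂ, the pointwise evaluation bound |ψ(w)|² · e^{-|w|²} ≤ (1/π)∫_ℂ |ψ(z)|² e^{-|z|²} dA(z) holds. -/

import Mathlib

open MeasureTheory Real

lemma submean_aux (g : ℂ → ℂ) (hg : Differentiable ℂ g) {r : ℝ} (hr : 0 < r) :
    2 * π * ‖g 0‖ ≤ ∫ θ in Set.Ioo (-π) π, ‖g (Complex.polarCoord.symm (r, θ))‖ := by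
  have key : (∮ z in C(0, r), (z - 0)⁻¹ • g z) = (2 * ↑π * Complex.I) • g 0 :=
    (hg.differentiableOn).circleIntegral_sub_inv_smul (Metric.mem_ball_self hr)
  have hcm : ∀ θ : ℝ, circleMap 0 r θ = Complex.polarCoord.symm (r, θ) := by
    intro θ
    rw [Complex.polarCoord_symm_apply]
    simp [circleMap, Complex.exp_mul_I]
  have h2 : ∀ θ : ℝ, ‖deriv (circleMap 0 r) θ • ((circleMap 0 r θ - 0)⁻¹ • g (circleMap 0 r θ))‖
      = ‖g (circleMap 0 r θ)‖ := by
    intro θ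
    simp only [deriv_circleMap, sub_zero, norm_smul, norm_inv, norm_mul, map_mul,
      Complex.norm_I, mul_one, norm_circleMap_zero, abs_of_pos hr]
    field_simp
  have h1 : 2 * π * ‖g 0‖ = ‖(2 * ↑π * Complex.I : ℂ) • g 0‖ := by
    simp [norm_smul, Complex.norm_real, abs_of_pos Real.pi_pos]
  have hper : Function.Periodic (fun θ : ℝ => ‖g (circleMap 0 r θ)‖) (2 * π) :=
    (periodic_circleMap 0 r).comp fun z => ‖g z‖
  have hshift := hper.intervalIntegral_add_eq 0 (-π)
  calc 2 * π * ‖g 0‖ = ‖(2 * ↑π * Complex.I : ℂ) • g 0‖ := h1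
    _ = ‖∮ z in C(0, r), (z - 0)⁻¹ • g z‖ := by rw [key]
    _ ≤ ∫ θ in (0:ℝ)..2*π, ‖deriv (circleMap 0 r) θ • ((circleMap 0 r θ - 0)⁻¹ • g (circleMap 0 r θ))‖ := by
        rw [circleIntegral]
        exact intervalIntegral.norm_integral_le_integral_norm (by positivity)
    _ = ∫ θ in (0:ℝ)..2*π, ‖g (circleMap 0 r θ)‖ := by simp only [h2]
    _ = ∫ θ in (-π)..π, ‖g (circleMap 0 r θ)‖ := by
        have h' : -π + 2*π = π := by ring
        rw [← zero_add (2*π), hshift, h']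
    _ = ∫ θ in Set.Ioo (-π) π, ‖g (circleMap 0 r θ)‖ := by
        rw [intervalIntegral.integral_of_le (by linarith [Real.pi_pos]),
          MeasureTheory.integral_Ioc_eq_integral_Ioo]
    _ = ∫ θ in Set.Ioo (-π) π, ‖g (Complex.polarCoord.symm (r, θ))‖ := by
        simp only [hcm]

lemma integrableOn_polar_real (f : ℝ × ℝ → ℝ) (hf : Integrable f) :
    IntegrableOn (fun p : ℝ × ℝ => p.1 • f (polarCoord.symm p)) polarCoord.target := by
  set B : ℝ × ℝ → ℝ × ℝ →L[ℝ] ℝ × ℝ := fun p =>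
    LinearMap.toContinuousLinearMap (Matrix.toLin (Module.Basis.finTwoProd ℝ) (Module.Basis.finTwoProd ℝ)
      !![Real.cos p.2, -p.1 * Real.sin p.2; Real.sin p.2, p.1 * Real.cos p.2])
  have A : ∀ p ∈ polarCoord.target, HasFDerivWithinAt polarCoord.symm (B p) polarCoord.target p :=
    fun p _ => (hasFDerivAt_polarCoord_symm p).hasFDerivWithinAt
  have B_det : ∀ p, (B p).det = p.1 := by
    intro p
    conv_rhs => rw [← one_mul p.1, ← cos_sq_add_sin_sq p.2]
    simp only [B, neg_mul, LinearMap.det_toContinuousLinearMap, LinearMap.det_toLin,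
      Matrix.det_fin_two_of, sub_neg_eq_add]
    ring
  have hinj : Set.InjOn polarCoord.symm polarCoord.target := polarCoord.symm.injOn
  have himg : polarCoord.symm '' polarCoord.target = polarCoord.source :=
    polarCoord.symm.image_source_eq_target
  have key := (integrableOn_image_iff_integrableOn_abs_det_fderiv_smul volume
    polarCoord.open_target.measurableSet A hinj f).mp (by rw [himg]; exact hf.integrableOn)
  refine key.congr_fun (fun p hp => ?_) polarCoord.open_target.measurableSet
  dsimp only
  rw [B_det, abs_of_pos hp.1]

lemma integrableOn_polar_complex (F : ℂ → ℝ) (hF : Integrable F) :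
    IntegrableOn (fun p : ℝ × ℝ => p.1 • F (Complex.polarCoord.symm p)) polarCoord.target := by
  have h0 : Integrable (F ∘ Complex.measurableEquivRealProd.symm) :=
    (Complex.volume_preserving_equiv_real_prod.symm).integrable_comp_emb
      Complex.measurableEquivRealProd.symm.measurableEmbedding |>.mpr hF
  exact integrableOn_polar_real (F ∘ Complex.measurableEquivRealProd.symm) h0

lemma gauss_half : ∫ r in Set.Ioi (0:ℝ), r * Real.exp (-r ^ 2) = 1 / 2 := by
  have hderiv : ∀ x ∈ Set.Ioi (0:ℝ), HasDerivAt (fun r : ℝ => -Real.exp (-r ^ 2) / 2)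
      (x * Real.exp (-x ^ 2)) x := by
    intro x _
    have h := (((hasDerivAt_pow 2 x).neg).exp).neg.div_const 2
    refine h.congr_deriv ?_
    simp
    ring
  have hint : IntegrableOn (fun r : ℝ => r * Real.exp (-r ^ 2)) (Set.Ioi 0) := by
    have := integrable_mul_exp_neg_mul_sq (b := 1) one_pos
    simpa using this.integrableOn
  have htend : Filter.Tendsto (fun r : ℝ => -Real.exp (-r ^ 2) / 2) Filter.atTop (nhds 0) := by
    have h1 : Filter.Tendsto (fun r : ℝ => -r ^ 2) Filter.atTop Filter.atBot :=
      Filter.tendsto_neg_atTop_atBot.comp (Filter.tendsto_pow_atTop two_ne_zero)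
    have := (Real.tendsto_exp_atBot.comp h1).neg.div_const 2
    simpa using this
  have hcont : ContinuousWithinAt (fun r : ℝ => -Real.exp (-r ^ 2) / 2) (Set.Ici 0) 0 :=
    (Continuous.continuousWithinAt (by continuity))
  have := MeasureTheory.integral_Ioi_of_hasDerivAt_of_tendsto hcont hderiv hint htend
  rw [this]
  norm_num

/-- If `ψ : ℂ → ℂ` is entire with finite Segal–Bargmann norm, then for every
`w ∈ ℂ` the pointwise evaluation bound
`|ψ(w)|² e^{-|w|²} ≤ (1/π) ∫_ℂ |ψ(z)|² e^{-|z|²} dA(z)` holds. -/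
theorem segal_bargmann_pointwise_bound (ψ : ℂ → ℂ)
    (hψ : Differentiable ℂ ψ)
    (hint : Integrable (fun z : ℂ => ‖ψ z‖ ^ 2 * Real.exp (-(‖z‖) ^ 2))) :
    ∀ w : ℂ,
      ‖ψ w‖ ^ 2 * Real.exp (-(‖w‖) ^ 2) ≤
        (1 / π) * ∫ z : ℂ, ‖ψ z‖ ^ 2 * Real.exp (-(‖z‖) ^ 2) := by
  intro w
  set h : ℂ → ℝ := fun z => ‖ψ z‖ ^ 2 * Real.exp (-(‖z‖) ^ 2) with hh
  set g : ℂ → ℂ := fun z => (ψ (w + z) * Complex.exp (-(starRingEnd ℂ w) * (w + z))) ^ 2 with hgdef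
  have hg : Differentiable ℂ g := by
    apply Differentiable.pow
    apply Differentiable.mul
    · exact hψ.comp ((differentiable_const _).add differentiable_id)
    · exact Complex.differentiable_exp.comp
        (((differentiable_const _).add differentiable_id).const_mul _)
  set F : ℂ → ℝ := fun z => ‖g z‖ * Real.exp (-(‖z‖) ^ 2) with hFdef
  have hkey : ∀ z : ℂ, F z = Real.exp (-(‖w‖) ^ 2) * h (w + z) := by
    intro z
    have hnorm : ‖g z‖ = ‖ψ (w + z)‖ ^ 2 *
        Real.exp (2 * (-(starRingEnd ℂ w) * (w + z)).re) := by
      rw [hgdef]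
      simp only [norm_pow, norm_mul, Complex.norm_exp, mul_pow]
      rw [← Real.exp_nat_mul]
      norm_num
    have hexp : 2 * (-(starRingEnd ℂ w) * (w + z)).re + -(‖z‖) ^ 2
        = -(‖w‖) ^ 2 + -(‖w + z‖) ^ 2 := by
      simp only [Complex.sq_norm, Complex.normSq_apply, Complex.mul_re, Complex.add_re,
        Complex.add_im, Complex.neg_re, Complex.neg_im, Complex.conj_re, Complex.conj_im]
      ring
    simp only [hFdef, hh]
    rw [hnorm, mul_assoc, ← Real.exp_add, hexp, Real.exp_add]
    ring
  have hF : Integrable F := by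
    have h1 : Integrable (fun z => h (w + z)) := hint.comp_add_left w
    have h2 := h1.const_mul (Real.exp (-(‖w‖) ^ 2))
    have heq : (fun z => Real.exp (-(‖w‖) ^ 2) * h (w + z)) = F := by
      funext z; rw [hkey]
    rwa [heq] at h2
  have hFval : ∫ z : ℂ, F z = Real.exp (-(‖w‖) ^ 2) * ∫ z : ℂ, h z := by
    calc ∫ z : ℂ, F z = ∫ z : ℂ, Real.exp (-(‖w‖) ^ 2) * h (w + z) := by
          simp_rw [hkey]
      _ = Real.exp (-(‖w‖) ^ 2) * ∫ z : ℂ, h (w + z) := integral_const_mul _ _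
      _ = Real.exp (-(‖w‖) ^ 2) * ∫ z : ℂ, h z := by
          rw [integral_add_left_eq_self h w]
  have hpolar : ∫ p in polarCoord.target, p.1 • F (Complex.polarCoord.symm p) = ∫ z : ℂ, F z :=
    Complex.integral_comp_polarCoord_symm F
  have hGint : IntegrableOn (fun p : ℝ × ℝ => p.1 • F (Complex.polarCoord.symm p))
      polarCoord.target := integrableOn_polar_complex F hF
  have htarget : polarCoord.target = Set.Ioi (0:ℝ) ×ˢ Set.Ioo (-π) π := rfl
  have hGint2 : Integrable (fun p : ℝ × ℝ => p.1 • F (Complex.polarCoord.symm p))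
      ((volume.restrict (Set.Ioi (0:ℝ))).prod (volume.restrict (Set.Ioo (-π) π))) := by
    rw [Measure.prod_restrict, ← Measure.volume_eq_prod]
    rw [htarget] at hGint
    exact hGint
  have hsplit : ∫ p in polarCoord.target, p.1 • F (Complex.polarCoord.symm p)
      = ∫ r in Set.Ioi (0:ℝ), ∫ θ in Set.Ioo (-π) π,
          (r : ℝ) • F (Complex.polarCoord.symm (r, θ)) := by
    rw [htarget, Measure.volume_eq_prod, setIntegral_prod _ (by rw [IntegrableOn, ← Measure.prod_restrict]; exact hGint2)]
  have hinner : ∀ r ∈ Set.Ioi (0:ℝ), (2 * π * ‖g 0‖) * (r * Real.exp (-r ^ 2))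
      ≤ ∫ θ in Set.Ioo (-π) π, (r : ℝ) • F (Complex.polarCoord.symm (r, θ)) := by
    intro r hr
    have hr' : (0:ℝ) < r := hr
    have habs : ∀ θ : ℝ, ‖Complex.polarCoord.symm (r, θ)‖ = r := by
      intro θ; rw [Complex.norm_polarCoord_symm]; exact abs_of_pos hr'
    have heq : ∀ θ : ℝ, (r : ℝ) • F (Complex.polarCoord.symm (r, θ))
        = (r * Real.exp (-r ^ 2)) * ‖g (Complex.polarCoord.symm (r, θ))‖ := by
      intro θ
      simp only [hFdef, smul_eq_mul, habs θ]
      ring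
    calc (2 * π * ‖g 0‖) * (r * Real.exp (-r ^ 2))
        = (r * Real.exp (-r ^ 2)) * (2 * π * ‖g 0‖) := by ring
      _ ≤ (r * Real.exp (-r ^ 2)) * ∫ θ in Set.Ioo (-π) π, ‖g (Complex.polarCoord.symm (r, θ))‖ :=
          mul_le_mul_of_nonneg_left (submean_aux g hg hr') (by positivity)
      _ = ∫ θ in Set.Ioo (-π) π, (r : ℝ) • F (Complex.polarCoord.symm (r, θ)) := by
          rw [← integral_const_mul]
          exact integral_congr_ae (Filter.Eventually.of_forall fun θ => (heq θ).symm)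
  have hlow_int : IntegrableOn (fun r : ℝ => (2 * π * ‖g 0‖) * (r * Real.exp (-r ^ 2)))
      (Set.Ioi (0:ℝ)) := by
    have := (integrable_mul_exp_neg_mul_sq (b := 1) one_pos).const_mul (2 * π * ‖g 0‖)
    simpa using this.integrableOn
  have hbig_int : IntegrableOn (fun r : ℝ => ∫ θ in Set.Ioo (-π) π,
      (r : ℝ) • F (Complex.polarCoord.symm (r, θ))) (Set.Ioi (0:ℝ)) :=
    hGint2.integral_prod_left
  have hmono := setIntegral_mono_on hlow_int hbig_int measurableSet_Ioi hinner
  have hval : ∫ r in Set.Ioi (0:ℝ), (2 * π * ‖g 0‖) * (r * Real.exp (-r ^ 2)) = π * ‖g 0‖ := by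
    rw [integral_const_mul, gauss_half]; ring
  have hchain : π * ‖g 0‖ ≤ Real.exp (-(‖w‖) ^ 2) * ∫ z : ℂ, h z := by
    rw [← hFval, ← hpolar, hsplit, ← hval]
    exact hmono
  have hg0 : ‖g 0‖ = Real.exp (-(‖w‖) ^ 2) *
      (‖ψ w‖ ^ 2 * Real.exp (-(‖w‖) ^ 2)) := by
    have := hkey 0
    simpa [hFdef, hh] using this
  have hepos : (0:ℝ) < Real.exp (-(‖w‖) ^ 2) := Real.exp_pos _
  have hπ := Real.pi_pos
  set A := ‖ψ w‖ ^ 2 * Real.exp (-(‖w‖) ^ 2) with hA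
  set I := ∫ z : ℂ, h z with hI
  have h1 : Real.exp (-(‖w‖) ^ 2) * (π * A)
      ≤ Real.exp (-(‖w‖) ^ 2) * I := by
    calc Real.exp (-(‖w‖) ^ 2) * (π * A)
        = π * (Real.exp (-(‖w‖) ^ 2) * A) := by ring
      _ = π * ‖g 0‖ := by rw [← hg0]
      _ ≤ Real.exp (-(‖w‖) ^ 2) * I := hchain
  have h2 : π * A ≤ I := le_of_mul_le_mul_left h1 hepos
  rw [one_div_mul_eq_div]
  rw [le_div_iff₀ hπ]
  calc A * π = π * A := mul_comm _ _
    _ ≤ I := h2
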